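/- arXiv:2509.10066 — 4 statements merged into one kernel-verified Lean document; each statement's English description precedes it below -/
import Mathlib

section
/- Let 0 < C < 1 and ω = 2/(1+C). Then the equation (1/2)((1−C)ω−2)z·κ⁻¹ + (z²+1−ω) + (1/2)((1+C)ω−2)z·κ = 0 is linear in κ and has the unique solution κ(z) = 2Cz/((C+1)z² + C − 1). Moreover, for every z ∈ ℂ with |z| > 1 one has |κ(z)| < 1, and the continuous extension to the unit circle satisfies κ(1) = 1 and κ(−1) = −1. -/
/-- When `ω = 2/(1+C)`, the D1Q2 characteristic equation is linear in `κ`, with unique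
solution `κ(z) = 2Cz/((C+1)z² + C − 1)`; this root is stable (`|κ(z)| < 1` for `|z| > 1`)
and its continuous extension to the unit circle satisfies `κ(1) = 1`, `κ(−1) = −1`. -/
theorem stmt_1 (C : ℝ) (hC0 : 0 < C) (hC1 : C < 1) (ω : ℝ) (hω : ω = 2 / (1 + C)) :
    (∀ z κ : ℂ, κ ≠ 0 →
      ((1 / 2 : ℂ) * (((1 - C) * ω - 2 : ℝ) : ℂ) * z * κ⁻¹
        + (z ^ 2 + 1 - (ω : ℂ))
        + (1 / 2 : ℂ) * (((1 + C) * ω - 2 : ℝ) : ℂ) * z * κ = 0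
        ↔ κ = 2 * (C : ℂ) * z / (((C : ℂ) + 1) * z ^ 2 + (C : ℂ) - 1))) ∧
    (∀ z : ℂ, 1 < ‖z‖ →
      ‖2 * (C : ℂ) * z / (((C : ℂ) + 1) * z ^ 2 + (C : ℂ) - 1)‖ < 1) ∧
    2 * (C : ℂ) * 1 / (((C : ℂ) + 1) * 1 ^ 2 + (C : ℂ) - 1) = 1 ∧
    2 * (C : ℂ) * (-1) / (((C : ℂ) + 1) * (-1) ^ 2 + (C : ℂ) - 1) = -1 := by
  have h1C : (0:ℝ) < 1 + C := by linarith
  have h1C' : (1 + C : ℝ) ≠ 0 := ne_of_gt h1C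
  have hc1C : ((1:ℂ) + (C:ℂ)) ≠ 0 := by
    exact_mod_cast (show ((1 + C : ℝ) : ℂ) ≠ 0 by exact_mod_cast h1C')
  have hc0 : (C:ℂ) ≠ 0 := by exact_mod_cast hC0.ne'
  subst hω
  have hA : ((1 - C) * (2 / (1 + C)) - 2 : ℝ) = -4 * C / (1 + C) := by
    field_simp; ring
  have hB : ((1 + C) * (2 / (1 + C)) - 2 : ℝ) = 0 := by field_simp; ring
  refine ⟨?_, ?_, ?_, ?_⟩
  · intro z κ hκ
    rw [hA, hB]
    push_cast
    by_cases hD : ((C:ℂ) + 1) * z ^ 2 + (C:ℂ) - 1 = 0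
    · rw [hD, div_zero]
      constructor
      · intro h
        exfalso
        have hz : z ≠ 0 := by
          intro hz0
          rw [hz0] at hD
          have hc1 : (C:ℂ) = 1 := by linear_combination hD
          have : C = (1:ℝ) := by exact_mod_cast hc1
          linarith
        field_simp at h
        have h4 : 4 * (1 + (C:ℂ)) * (C:ℂ) * z = 0 := by
          linear_combination -(1 + (C:ℂ)) * h + (2 * (1 + (C:ℂ)) * κ) * hD
        rcases mul_eq_zero.mp h4 with h5 | h5
        · rcases mul_eq_zero.mp h5 with h6 | h6
          · rcases mul_eq_zero.mp h6 with h7 | h7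
            · norm_num at h7
            · exact hc1C h7
          · exact hc0 h6
        · exact hz h5
      · intro h; exact absurd h hκ
    · rw [eq_div_iff hD]
      constructor
      · intro h
        field_simp at h
        have h5 : (2 * (1 + (C:ℂ))) *
            (κ * (((C:ℂ) + 1) * z ^ 2 + (C:ℂ) - 1) - 2 * (C:ℂ) * z) = 0 := by
          linear_combination (1 + (C:ℂ)) * h
        have h6 := (mul_eq_zero.mp h5).resolve_left
          (mul_ne_zero two_ne_zero hc1C)
        linear_combination h6
      · intro h
        have hz : z ≠ 0 := by
          intro hz0
          apply hκ
          have : κ * (((C:ℂ) + 1) * z ^ 2 + (C:ℂ) - 1) = 0 := by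
            rw [h, hz0]; ring
          exact ((mul_eq_zero.mp this).resolve_right hD)
        have hκeq : κ = 2 * (C:ℂ) * z / (((C:ℂ) + 1) * z ^ 2 + (C:ℂ) - 1) :=
          (eq_div_iff hD).mpr h
        rw [hκeq]
        field_simp
        ring
  · intro z hz
    have hzn : (0:ℝ) < ‖z‖ := lt_trans one_pos hz
    have hnum : ‖2 * (C:ℂ) * z‖ = 2 * C * ‖z‖ := by
      rw [norm_mul, norm_mul]
      simp [Complex.norm_real, abs_of_pos hC0]
    have hDge : (C + 1) * ‖z‖ ^ 2 - (1 - C) ≤ ‖((C:ℂ) + 1) * z ^ 2 + (C:ℂ) - 1‖ := by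
      have heq : ((C:ℂ) + 1) * z ^ 2 + (C:ℂ) - 1 =
          (((C + 1 : ℝ)):ℂ) * z ^ 2 - (((1 - C : ℝ)):ℂ) := by push_cast; ring
      rw [heq]
      calc (C + 1) * ‖z‖ ^ 2 - (1 - C)
          = ‖(((C + 1 : ℝ)):ℂ) * z ^ 2‖ - ‖(((1 - C : ℝ)):ℂ)‖ := by
            rw [norm_mul, norm_pow, Complex.norm_real, Complex.norm_real,
              Real.norm_eq_abs, Real.norm_eq_abs, abs_of_pos (by linarith : (0:ℝ) < C + 1),
              abs_of_pos (by linarith : (0:ℝ) < 1 - C)]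
        _ ≤ _ := norm_sub_norm_le _ _
    have hexp : ((C + 1) * ‖z‖ + (1 - C)) * (‖z‖ - 1)
        = (C + 1) * ‖z‖ ^ 2 - 2 * C * ‖z‖ - (1 - C) := by ring
    have hpos : 0 < ((C + 1) * ‖z‖ + (1 - C)) * (‖z‖ - 1) :=
      mul_pos (by nlinarith) (by linarith)
    have hineq : 2 * C * ‖z‖ < (C + 1) * ‖z‖ ^ 2 - (1 - C) := by nlinarith
    have hDpos : 0 < ‖((C:ℂ) + 1) * z ^ 2 + (C:ℂ) - 1‖ := by nlinarith
    rw [norm_div, div_lt_one hDpos, hnum]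
    linarith
  · rw [show ((C:ℂ) + 1) * 1 ^ 2 + (C:ℂ) - 1 = 2 * (C:ℂ) by ring]
    field_simp
  · rw [show ((C:ℂ) + 1) * (-1) ^ 2 + (C:ℂ) - 1 = 2 * (C:ℂ) by ring]
    field_simp
end

section
/- Let C ∈ ℝ with C ≠ 0 and ω ∈ (0, 2), and assume |C| ≤ 1. Then all four roots of the polynomial φ(z) = (ω−1)²z⁴ + ((C²−1)ω² + 2ω − 2)z² + 1 satisfy |z| > 1. If instead ω = 2 and |C| < 1, then all roots of φ satisfy |z| = 1. -/
lemma quadConj (a b : ℝ) (w : ℂ) (h : (a:ℂ) * w^2 + (b:ℂ) * w + 1 = 0)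
    (him : w.im ≠ 0) : a * Complex.normSq w = 1 := by
  have h2 : (a:ℂ) * (starRingEnd ℂ w)^2 + (b:ℂ) * (starRingEnd ℂ w) + 1 = 0 := by
    have := congrArg (starRingEnd ℂ) h
    simpa [map_add, map_mul, map_pow, Complex.conj_ofReal] using this
  have hne : w - starRingEnd ℂ w ≠ 0 := by
    intro he
    exact him (Complex.conj_eq_iff_im.mp (sub_eq_zero.mp he).symm)
  have h3 : (w - starRingEnd ℂ w) * ((a:ℂ)*(w + starRingEnd ℂ w) + b) = 0 := by
    linear_combination h - h2
  have hf : (a:ℂ)*(w + starRingEnd ℂ w) + b = 0 := by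
    rcases mul_eq_zero.mp h3 with h' | h'
    · exact absurd h' hne
    · exact h'
  have h4 : (a:ℂ) * (w * starRingEnd ℂ w) = 1 := by linear_combination w * hf - h
  rw [Complex.mul_conj] at h4
  exact_mod_cast h4

lemma quadReal (a b : ℝ) (w : ℂ) (h : (a:ℂ) * w^2 + (b:ℂ) * w + 1 = 0)
    (him : w.im = 0) : a * w.re^2 + b * w.re + 1 = 0 := by
  have hw : w = (w.re : ℂ) := Complex.ext rfl (by simp [him])
  rw [hw] at h
  have : ((a * w.re^2 + b * w.re + 1 : ℝ) : ℂ) = 0 := by push_cast; linear_combination h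
  exact_mod_cast this

/-- Location of the roots of the radicand polynomial
`φ(z) = (ω−1)²z⁴ + ((C²−1)ω² + 2ω − 2)z² + 1` of the D1Q2 scheme: for `ω ∈ (0,2)` and
`|C| ≤ 1` all roots are strictly outside the closed unit disk; for `ω = 2` and `|C| < 1`
all roots are on the unit circle. -/
theorem stmt_7 (C : ℝ) (hC : C ≠ 0) :
    (∀ ω : ℝ, 0 < ω → ω < 2 → |C| ≤ 1 → ∀ z : ℂ,
      (((ω - 1) ^ 2 : ℝ) : ℂ) * z ^ 4
        + (((C ^ 2 - 1) * ω ^ 2 + 2 * ω - 2 : ℝ) : ℂ) * z ^ 2 + 1 = 0 →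
      1 < ‖z‖) ∧
    (|C| < 1 → ∀ z : ℂ,
      ((((2 : ℝ) - 1) ^ 2 : ℝ) : ℂ) * z ^ 4
        + (((C ^ 2 - 1) * 2 ^ 2 + 2 * 2 - 2 : ℝ) : ℂ) * z ^ 2 + 1 = 0 →
      ‖z‖ = 1) := by
  have hC2 : 0 < C^2 := by positivity
  constructor
  · intro ω hω0 hω2 hCle z hz
    have hns : Complex.normSq (z^2) = ‖z‖^4 := by
      rw [Complex.normSq_eq_norm_sq, norm_pow]; ring
    have hz' : (((ω-1)^2 : ℝ):ℂ) * (z^2)^2 + (((C^2-1)*ω^2+2*ω-2 : ℝ):ℂ) * (z^2) + 1 = 0 := by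
      push_cast at hz ⊢; linear_combination hz
    set a : ℝ := (ω-1)^2 with hadef
    set b : ℝ := (C^2-1)*ω^2+2*ω-2 with hbdef
    have ha0 : 0 ≤ a := sq_nonneg _
    have ha1 : a < 1 := by rw [hadef]; nlinarith
    have hC1 : C^2 ≤ 1 := by nlinarith [sq_abs C, abs_nonneg C]
    have hP : 0 < a + b + 1 := by
      have h1 : 0 < C^2 * ω^2 := mul_pos hC2 (pow_pos hω0 2)
      rw [hadef, hbdef]; nlinarith
    have hQ : 0 < a - b + 1 := by
      rw [hadef, hbdef]
      nlinarith [mul_pos (show (0:ℝ) < 2-ω by linarith) (show (0:ℝ) < 2-ω by linarith),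
        mul_nonneg (sub_nonneg.2 hC1) (sq_nonneg ω)]
    suffices h4 : 1 < ‖z‖^4 by
      by_contra hle
      push_neg at hle
      have := pow_le_one₀ (norm_nonneg z) hle (n := 4)
      linarith
    by_cases ha : a = 0
    · have h' : (ω-1)^2 = 0 := by rw [← hadef]; exact ha
      have hω1 : ω = 1 := by
        have := pow_eq_zero_iff (n := 2) (by norm_num) |>.mp h'
        linarith
      have haC : ((a:ℝ):ℂ) = 0 := by exact_mod_cast congrArg (Complex.ofReal) ha
      have hzb : (b:ℂ) * z^2 = -1 := by linear_combination hz' - (z^2)^2 * haC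
      have hnorm : |b| * ‖z‖^2 = 1 := by
        have := congrArg norm hzb
        simpa [norm_mul, Complex.norm_real, Real.norm_eq_abs, norm_pow] using this
      have hblt : |b| < 1 := by
        have hb : b = C^2 - 1 := by rw [hbdef, hω1]; ring
        rw [hb, abs_of_nonpos (by linarith)]
        linarith
      nlinarith [hnorm, hblt, norm_nonneg z, abs_nonneg b]
    · have haa : 0 < a := lt_of_le_of_ne ha0 (Ne.symm ha)
      by_cases him : (z^2).im = 0
      · have hr := quadReal a b (z^2) hz' him
        set r := (z^2).re with hrdef
        have hr4 : ‖z‖^4 = r^2 := by rw [← hns, Complex.normSq_apply, him]; ring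
        rw [hr4]
        by_contra hle
        push_neg at hle
        have hr0 : r ≠ 0 := by intro h0; rw [h0] at hr; norm_num at hr
        have hbr : b * r = -(a * r^2 + 1) := by linarith
        have hbr2 : (b*r)^2 = (a*r^2+1)^2 := by rw [hbr]; ring
        have hrp : 0 < r^2 := by positivity
        have ha2 : (0:ℝ) ≤ 1 - a^2*r^2 := by nlinarith
        nlinarith [mul_pos (mul_pos hP hQ) hrp,
          mul_nonneg (by linarith : (0:ℝ) ≤ 1 - r^2) ha2, hbr2]
      · have hn := quadConj a b (z^2) hz' him
        rw [hns] at hn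
        nlinarith [hn, ha1, haa]
  · intro hClt z hz
    have hns : Complex.normSq (z^2) = ‖z‖^4 := by
      rw [Complex.normSq_eq_norm_sq, norm_pow]; ring
    have hz' : ((1 : ℝ):ℂ) * (z^2)^2 + ((4*C^2-2 : ℝ):ℂ) * (z^2) + 1 = 0 := by
      push_cast at hz ⊢; linear_combination hz
    have hC1 : C^2 < 1 := by nlinarith [sq_abs C, abs_nonneg C]
    suffices h4 : ‖z‖^4 = 1 by
      have h1 : ‖z‖ ≤ 1 := by
        by_contra h; push_neg at h
        have := one_lt_pow₀ h (by norm_num : (4:ℕ) ≠ 0)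
        linarith
      have h2 : 1 ≤ ‖z‖ := by
        by_contra h; push_neg at h
        have := pow_lt_one₀ (norm_nonneg z) h (by norm_num : (4:ℕ) ≠ 0)
        linarith
      linarith
    by_cases him : (z^2).im = 0
    · exfalso
      have hr := quadReal 1 (4*C^2-2) (z^2) hz' him
      nlinarith [hr, sq_nonneg (2*(z^2).re + (4*C^2-2)),
        mul_pos hC2 (show (0:ℝ) < 1-C^2 by linarith)]
    · have hn := quadConj 1 (4*C^2-2) (z^2) hz' him
      rw [hns] at hn
      linarith
end

section
/- Let 0 < C < 1/2 and set Π̃(C) = (4C²−1)(C²−1). Then Π̃(C) > 0, and the two real numbers θ_I = arctan(√(4(1−C²)√Π̃(C) − 8C⁴ + 13C² + 4) / (2(1−C²) − √Π̃(C))) and θ_II = arctan(√(−4(1−C²)√Π̃(C) − 8C⁴ + 13C² + 4) / (2(1−C²) + √Π̃(C))) are well defined, with both radicands nonnegative, and the four complex numbers ζ = (2/3)(1−C²) ∓ (1/3)√Π̃(C) ± (i/3)√(±4(1−C²)√Π̃(C) − 8C⁴ + 13C² + 4) all have modulus 1. -/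
/-- `Π̃(C) = (4C²−1)(C²−1)`. -/
noncomputable def Ptil (C : ℝ) : ℝ := (4 * C ^ 2 - 1) * (C ^ 2 - 1)

/-- Radicand appearing in `θ_I`. -/
noncomputable def rad₁ (C : ℝ) : ℝ :=
  4 * (1 - C ^ 2) * Real.sqrt (Ptil C) - 8 * C ^ 4 + 13 * C ^ 2 + 4

/-- Radicand appearing in `θ_II`. -/
noncomputable def rad₂ (C : ℝ) : ℝ :=
  -4 * (1 - C ^ 2) * Real.sqrt (Ptil C) - 8 * C ^ 4 + 13 * C ^ 2 + 4


lemma norm_add_mul_I_eq_one (a b : ℝ) (h : a ^ 2 + b ^ 2 = 1) :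
    ‖((a : ℂ) + (b : ℂ) * Complex.I)‖ = 1 := by
  rw [Complex.norm_add_mul_I, h, Real.sqrt_one]

lemma norm_sub_mul_I_eq_one (a b : ℝ) (h : a ^ 2 + b ^ 2 = 1) :
    ‖((a : ℂ) - (b : ℂ) * Complex.I)‖ = 1 := by
  have : ((a : ℂ) - (b : ℂ) * Complex.I) = ((a : ℂ) + ((-b : ℝ) : ℂ) * Complex.I) := by
    push_cast; ring
  rw [this]
  exact norm_add_mul_I_eq_one a (-b) (by nlinarith)

/-- For `0 < C < 1/2`: `Π̃(C) > 0`, both radicands are nonnegative (so `θ_I`, `θ_II` are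
well defined), and the four branch points
`(2/3)(1−C²) ∓ (1/3)√Π̃(C) ± (i/3)√(±4(1−C²)√Π̃(C) − 8C⁴ + 13C² + 4)` all have modulus 1. -/
theorem stmt_11 (C : ℝ) (h0 : 0 < C) (h1 : C < 1 / 2) :
    0 < Ptil C ∧ 0 ≤ rad₁ C ∧ 0 ≤ rad₂ C ∧
    ‖((2 / 3 * (1 - C ^ 2) - Real.sqrt (Ptil C) / 3 : ℝ) : ℂ)
        + ((Real.sqrt (rad₁ C) / 3 : ℝ) : ℂ) * Complex.I‖ = 1 ∧
    ‖((2 / 3 * (1 - C ^ 2) - Real.sqrt (Ptil C) / 3 : ℝ) : ℂ)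
        - ((Real.sqrt (rad₁ C) / 3 : ℝ) : ℂ) * Complex.I‖ = 1 ∧
    ‖((2 / 3 * (1 - C ^ 2) + Real.sqrt (Ptil C) / 3 : ℝ) : ℂ)
        + ((Real.sqrt (rad₂ C) / 3 : ℝ) : ℂ) * Complex.I‖ = 1 ∧
    ‖((2 / 3 * (1 - C ^ 2) + Real.sqrt (Ptil C) / 3 : ℝ) : ℂ)
        - ((Real.sqrt (rad₂ C) / 3 : ℝ) : ℂ) * Complex.I‖ = 1 := by
  have hC2 : C ^ 2 < 1 / 4 := by nlinarith [mul_pos h0 h0]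
  have hPt : 0 < Ptil C := by
    unfold Ptil
    nlinarith [mul_pos (by nlinarith : (0:ℝ) < 1 - 4 * C ^ 2)
      (by nlinarith : (0:ℝ) < 1 - C ^ 2)]
  set s := Real.sqrt (Ptil C) with hsdef
  have hs0 : 0 ≤ s := Real.sqrt_nonneg _
  have hs2 : s ^ 2 = (4 * C ^ 2 - 1) * (C ^ 2 - 1) := Real.sq_sqrt hPt.le
  have hA : (0:ℝ) < -8 * C ^ 4 + 13 * C ^ 2 + 4 := by
    nlinarith [mul_pos (by nlinarith : (0:ℝ) < C ^ 2) (by nlinarith : (0:ℝ) < 1/4 - C ^ 2)]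
  have hr1 : 0 ≤ rad₁ C := by
    unfold rad₁; rw [← hsdef]; nlinarith
  have hB0 : 0 ≤ 4 * (1 - C ^ 2) * s :=
    mul_nonneg (by nlinarith : (0:ℝ) ≤ 4 * (1 - C ^ 2)) hs0
  have hsq : (4 * (1 - C ^ 2) * s) ^ 2 ≤ (-8 * C ^ 4 + 13 * C ^ 2 + 4) ^ 2 := by
    nlinarith [hs2, mul_pos (by nlinarith : (0:ℝ) < C ^ 2)
      (by nlinarith : (0:ℝ) < 8 - 5 * C ^ 2)]
  have hr2 : 0 ≤ rad₂ C := by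
    unfold rad₂; rw [← hsdef]
    nlinarith [hsq, hA, hB0]
  have hsr1 : Real.sqrt (rad₁ C) ^ 2 = rad₁ C := Real.sq_sqrt hr1
  have hsr2 : Real.sqrt (rad₂ C) ^ 2 = rad₂ C := Real.sq_sqrt hr2
  have hd1 : rad₁ C = 4 * (1 - C ^ 2) * s - 8 * C ^ 4 + 13 * C ^ 2 + 4 := by
    unfold rad₁; rw [← hsdef]
  have hd2 : rad₂ C = -4 * (1 - C ^ 2) * s - 8 * C ^ 4 + 13 * C ^ 2 + 4 := by
    unfold rad₂; rw [← hsdef]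
  have e1 : (2 / 3 * (1 - C ^ 2) - s / 3) ^ 2 + (Real.sqrt (rad₁ C) / 3) ^ 2 = 1 := by
    rw [div_pow, hsr1, hd1]
    linear_combination hs2 / 9
  have e2 : (2 / 3 * (1 - C ^ 2) + s / 3) ^ 2 + (Real.sqrt (rad₂ C) / 3) ^ 2 = 1 := by
    rw [div_pow, hsr2, hd2]
    linear_combination hs2 / 9
  exact ⟨hPt, hr1, hr2,
    norm_add_mul_I_eq_one _ _ e1, norm_sub_mul_I_eq_one _ _ e1,
    norm_add_mul_I_eq_one _ _ e2, norm_sub_mul_I_eq_one _ _ e2⟩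
end

section
/- Let N ≥ 1, let A ∈ ℝ^{N×N} be diagonalizable with real eigenvalues a₁, …, a_N, let λ > 0, ω ∈ ℝ, and set C_k = a_k/λ. Define the 2N×2N matrix-valued Laurent polynomial E(κ) with N×N blocks E₁₁ = (1/2)(κ⁻¹+κ)I + (ω/(2λ))(κ⁻¹−κ)A, E₁₂ = ((1−ω)/2)(κ⁻¹−κ)I, E₂₁ = (1/2)(κ⁻¹−κ)I + (ω/(2λ))(κ⁻¹+κ)A, E₂₂ = ((1−ω)/2)(κ⁻¹+κ)I. Then for every z ∈ ℂ and κ ∈ ℂ \ {0}: det(zI₂N − E(κ)) = Π_{k=1}^{N} [ (1/2)((1−C_k)ω−2)z κ⁻¹ + (z² + 1 − ω) + (1/2)((1+C_k)ω−2)z κ ]. -/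
open Matrix

private lemma det_fromBlocks_diag {n : ℕ} (d₁ d₂ d₃ d₄ : Fin n → ℂ) :
    (Matrix.fromBlocks (Matrix.diagonal d₁) (Matrix.diagonal d₂)
      (Matrix.diagonal d₃) (Matrix.diagonal d₄)).det
      = ∏ k : Fin n, (d₁ k * d₄ k - d₂ k * d₃ k) := by
  let e : (Fin n ⊕ Fin n) ≃ (Fin 2 × Fin n) :=
    { toFun := Sum.elim (fun k => (0, k)) (fun k => (1, k))
      invFun := fun p => if p.1 = 0 then Sum.inl p.2 else Sum.inr p.2
      left_inv := by rintro (k | k) <;> simp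
      right_inv := by rintro ⟨i, k⟩; fin_cases i <;> simp }
  have h : Matrix.fromBlocks (Matrix.diagonal d₁) (Matrix.diagonal d₂)
      (Matrix.diagonal d₃) (Matrix.diagonal d₄)
      = (Matrix.blockDiagonal (fun k => !![d₁ k, d₂ k; d₃ k, d₄ k])).submatrix e e := by
    ext i j
    rcases i with k | k <;> rcases j with l | l <;>
      simp [e, Matrix.blockDiagonal_apply, Matrix.diagonal_apply, eq_comm] <;>
      rcases eq_or_ne k l with h | h <;> simp [h]
  rw [h, Matrix.det_submatrix_equiv_self, Matrix.det_blockDiagonal]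
  refine Finset.prod_congr rfl fun k _ => ?_
  rw [Matrix.det_fin_two_of]

private lemma smul_one_add_smul_diag_conj {n : ℕ} (Rc : Matrix (Fin n) (Fin n) ℂ)
    (h1 : Rc⁻¹ * Rc = 1) (h2 : Rc * Rc⁻¹ = 1) (d : Fin n → ℂ) (α β : ℂ) :
    Rc⁻¹ * (α • (1 : Matrix (Fin n) (Fin n) ℂ)
        + β • (Rc * Matrix.diagonal d * Rc⁻¹)) * Rc
      = Matrix.diagonal (fun k => α + β * d k) := by
  have : Rc⁻¹ * (α • (1 : Matrix (Fin n) (Fin n) ℂ)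
        + β • (Rc * Matrix.diagonal d * Rc⁻¹)) * Rc
      = α • (Rc⁻¹ * Rc) + β • ((Rc⁻¹ * Rc) * Matrix.diagonal d * (Rc⁻¹ * Rc)) := by
    simp only [Matrix.mul_add, Matrix.add_mul, Matrix.mul_smul, Matrix.smul_mul,
      Matrix.mul_one]
    noncomm_ring
  rw [this, h1]
  ext i j
  rcases eq_or_ne i j with h | h <;>
    simp [Matrix.diagonal_apply, Matrix.one_apply, h, mul_comm]

/-- Factorization of the characteristic polynomial of the symbol of the vectorial
`D1Q2^N` lattice Boltzmann scheme for `∂_t u + A ∂_x u = 0`: it is the product of the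
scalar D1Q2 characteristic polynomials, one per characteristic speed `a_k`. -/
theorem stmt_17 (N : ℕ) (hN : 1 ≤ N)
    (A : Matrix (Fin N) (Fin N) ℝ) (a : Fin N → ℝ)
    (R : Matrix (Fin N) (Fin N) ℝ) (hR : IsUnit R.det)
    (hA : A = R * Matrix.diagonal a * R⁻¹)
    (lam ω : ℝ) (hlam : 0 < lam)
    (Ck : Fin N → ℝ) (hCk : ∀ k, Ck k = a k / lam)
    (E : ℂ → Matrix (Fin N ⊕ Fin N) (Fin N ⊕ Fin N) ℂ)
    (hE : ∀ κ : ℂ, E κ = Matrix.fromBlocks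
      (((1 / 2 : ℂ) * (κ⁻¹ + κ)) • (1 : Matrix (Fin N) (Fin N) ℂ)
        + (((ω / (2 * lam) : ℝ) : ℂ) * (κ⁻¹ - κ)) • A.map (Complex.ofReal))
      (((((1 - ω) / 2 : ℝ) : ℂ) * (κ⁻¹ - κ)) • (1 : Matrix (Fin N) (Fin N) ℂ))
      (((1 / 2 : ℂ) * (κ⁻¹ - κ)) • (1 : Matrix (Fin N) (Fin N) ℂ)
        + (((ω / (2 * lam) : ℝ) : ℂ) * (κ⁻¹ + κ)) • A.map (Complex.ofReal))
      (((((1 - ω) / 2 : ℝ) : ℂ) * (κ⁻¹ + κ)) • (1 : Matrix (Fin N) (Fin N) ℂ))) :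
    ∀ (z κ : ℂ), κ ≠ 0 →
      (z • (1 : Matrix (Fin N ⊕ Fin N) (Fin N ⊕ Fin N) ℂ) - E κ).det
        = ∏ k : Fin N,
            ((1 / 2 : ℂ) * (((1 - Ck k) * ω - 2 : ℝ) : ℂ) * z * κ⁻¹
              + (z ^ 2 + 1 - (ω : ℂ))
              + (1 / 2 : ℂ) * (((1 + Ck k) * ω - 2 : ℝ) : ℂ) * z * κ) := by
  intro z κ hκ
  have hlam0 : (lam : ℂ) ≠ 0 := by
    exact_mod_cast ne_of_gt (by exact_mod_cast hlam : (0:ℝ) < lam)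
  -- set up complex versions
  set Rc : Matrix (Fin N) (Fin N) ℂ := R.map Complex.ofReal with hRcdef
  have hmul : ∀ (M P : Matrix (Fin N) (Fin N) ℝ),
      (M * P).map Complex.ofReal = M.map Complex.ofReal * P.map Complex.ofReal := by
    intro M P; ext i j; simp [Matrix.mul_apply]
  have hdet : Rc.det = (R.det : ℂ) := by
    exact (RingHom.map_det Complex.ofRealHom R).symm
  have hRc : IsUnit Rc.det := by
    rw [hdet]
    simp only [isUnit_iff_ne_zero] at hR ⊢
    exact_mod_cast hR
  have h1 : Rc⁻¹ * Rc = 1 := Matrix.nonsing_inv_mul _ hRc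
  have h2 : Rc * Rc⁻¹ = 1 := Matrix.mul_nonsing_inv _ hRc
  have hinv : (R⁻¹).map Complex.ofReal = Rc⁻¹ := by
    refine (Matrix.inv_eq_right_inv ?_).symm
    rw [hRcdef, ← hmul, Matrix.mul_nonsing_inv _ hR]
    ext i j; simp [Matrix.one_apply]; split <;> simp
  have hAm : A.map Complex.ofReal
      = Rc * Matrix.diagonal (fun k => (a k : ℂ)) * Rc⁻¹ := by
    rw [hA, hmul, hmul, hinv, hRcdef]
    congr 2
    exact Matrix.diagonal_map (by simp)
  set c : ℂ := ((ω / (2 * lam) : ℝ) : ℂ) with hc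
  set w : ℂ := (((1 - ω) / 2 : ℝ) : ℂ) with hw
  set d : Fin N → ℂ := fun k => (a k : ℂ) with hd
  -- rewrite `z • 1 - E κ` as a `fromBlocks` of `α • 1 + β • Am` blocks
  have hX : z • (1 : Matrix (Fin N ⊕ Fin N) (Fin N ⊕ Fin N) ℂ) - E κ
      = Matrix.fromBlocks
        ((z - (1 / 2 : ℂ) * (κ⁻¹ + κ)) • (1 : Matrix (Fin N) (Fin N) ℂ)
          + (-(c * (κ⁻¹ - κ))) • A.map Complex.ofReal)
        ((-(w * (κ⁻¹ - κ))) • (1 : Matrix (Fin N) (Fin N) ℂ)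
          + (0 : ℂ) • A.map Complex.ofReal)
        ((-((1 / 2 : ℂ) * (κ⁻¹ - κ))) • (1 : Matrix (Fin N) (Fin N) ℂ)
          + (-(c * (κ⁻¹ + κ))) • A.map Complex.ofReal)
        ((z - w * (κ⁻¹ + κ)) • (1 : Matrix (Fin N) (Fin N) ℂ)
          + (0 : ℂ) • A.map Complex.ofReal) := by
    rw [hE κ, ← Matrix.fromBlocks_one, Matrix.fromBlocks_smul, sub_eq_add_neg,
      Matrix.fromBlocks_neg, Matrix.fromBlocks_add]
    rw [Matrix.fromBlocks_inj]
    refine ⟨by module, by module, by module, by module⟩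
  rw [hX]
  -- conjugate by the block-diagonal change of basis
  set S : Matrix (Fin N ⊕ Fin N) (Fin N ⊕ Fin N) ℂ :=
    Matrix.fromBlocks Rc 0 0 Rc with hS
  set S' : Matrix (Fin N ⊕ Fin N) (Fin N ⊕ Fin N) ℂ :=
    Matrix.fromBlocks Rc⁻¹ 0 0 Rc⁻¹ with hS'
  have hSS : S'.det * S.det = 1 := by
    rw [← Matrix.det_mul, hS, hS', Matrix.fromBlocks_multiply]
    simp [h1]
  have key : ∀ (X : Matrix (Fin N ⊕ Fin N) (Fin N ⊕ Fin N) ℂ),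
      X.det = (S' * X * S).det := by
    intro X
    rw [Matrix.det_mul, Matrix.det_mul]
    calc X.det = (S'.det * S.det) * X.det := by rw [hSS, one_mul]
      _ = S'.det * X.det * S.det := by ring
  rw [key]
  have hconj : ∀ (α β : ℂ),
      Rc⁻¹ * (α • (1 : Matrix (Fin N) (Fin N) ℂ) + β • A.map Complex.ofReal) * Rc
        = Matrix.diagonal (fun k => α + β * d k) := by
    intro α β
    rw [hAm]
    exact smul_one_add_smul_diag_conj Rc h1 h2 d α β
  rw [hS, hS', Matrix.fromBlocks_multiply, Matrix.fromBlocks_multiply]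
  simp only [Matrix.mul_zero, Matrix.zero_mul, add_zero, zero_add, Matrix.mul_assoc]
  rw [← Matrix.mul_assoc, ← Matrix.mul_assoc, ← Matrix.mul_assoc, ← Matrix.mul_assoc,
    hconj, hconj, hconj, hconj, det_fromBlocks_diag]
  refine Finset.prod_congr rfl fun k _ => ?_
  have hak : (Ck k : ℂ) * (lam : ℂ) = (a k : ℂ) := by
    rw [hCk k]; push_cast; field_simp
  have hdk : d k = (Ck k : ℂ) * (lam : ℂ) := by simp only [hd]; rw [← hak]
  have hkey : ∀ x : ℂ, c * x * d k = (ω : ℂ) * (Ck k : ℂ) / 2 * x := by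
    intro x
    rw [hdk, hc]
    push_cast
    field_simp
  have hu : κ⁻¹ * κ = 1 := inv_mul_cancel₀ hκ
  simp only [zero_mul, add_zero, neg_mul]
  rw [hkey, hkey, hw]
  push_cast
  linear_combination ((1 : ℂ) - (ω : ℂ)) * hu
end
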